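/- Let ν ∈ (0,1], μ > 0, n₀ ≥ 1, and E_ν the Mittag-Leffler function E_{ν,1}. Define p_k^ν(t) = C(n₀,k) ∑_{r=0}^{n₀-k} C(n₀-k,r)(-1)^r E_ν(-(k+r)μ t^ν) for 0 ≤ k ≤ n₀. Then ∑_{k=0}^{n₀} p_k^ν(t) = 1 for every t > 0. -/

import Mathlib

open Finset

lemma key_sum (n : ℕ) (f : ℕ → ℝ) :
    ∑ k ∈ range (n + 1), (n.choose k : ℝ) *
        ∑ r ∈ range (n - k + 1), ((n - k).choose r : ℝ) * (-1) ^ r * f (k + r) = f 0 := by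
  have h1 : ∀ k ∈ range (n + 1), (n.choose k : ℝ) *
      ∑ r ∈ range (n - k + 1), ((n - k).choose r : ℝ) * (-1) ^ r * f (k + r)
      = ∑ r ∈ range (n - k + 1), (n.choose k : ℝ) * ((n - k).choose r) * (-1) ^ r * f (k + r) := by
    intro k _
    rw [mul_sum]; apply sum_congr rfl; intro r _; ring
  rw [sum_congr rfl h1]
  rw [sum_sigma']
  rw [Finset.sum_nbij' (i := fun p => (⟨p.1 + p.2, p.1⟩ : Σ _ : ℕ, ℕ))
      (j := fun p => (⟨p.2, p.1 - p.2⟩ : Σ _ : ℕ, ℕ))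
      (t := (range (n + 1)).sigma fun j => range (j + 1))
      (g := fun p => (n.choose p.2 : ℝ) * ((n - p.2).choose (p.1 - p.2)) * (-1) ^ (p.1 - p.2) * f p.1)]
  · -- now sum over j, k
    have h2 : ∀ j ∈ range (n + 1), ∑ k ∈ range (j + 1),
        (n.choose k : ℝ) * ((n - k).choose (j - k)) * (-1) ^ (j - k) * f j
        = (if j = 0 then 1 else 0) * f j := by
      intro j hj
      rw [mem_range, Nat.lt_succ_iff] at hj
      have h3 : ∀ k ∈ range (j + 1), (n.choose k : ℝ) * ((n - k).choose (j - k)) * (-1) ^ (j - k) * f j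
          = (n.choose j : ℝ) * ((j.choose k) * (-1) ^ (j - k)) * f j := by
        intro k hk
        rw [mem_range, Nat.lt_succ_iff] at hk
        have := Nat.choose_mul (n := n) hk
        have h4 : (n.choose j : ℝ) * (j.choose k) = (n.choose k : ℝ) * ((n - k).choose (j - k)) := by
          exact_mod_cast congrArg (Nat.cast (R := ℝ)) this
        rw [← mul_assoc, ← h4]
        try ring
      rw [sum_congr rfl h3, ← sum_mul, ← mul_sum]
      have h5 : ∑ k ∈ range (j + 1), ((j.choose k : ℝ)) * (-1) ^ (j - k)
          = if j = 0 then 1 else 0 := by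
        have := Int.alternating_sum_range_choose (n := j)
        have h6 : ∑ k ∈ range (j + 1), ((j.choose k : ℝ)) * (-1) ^ (j - k)
            = ∑ k ∈ range (j + 1), (-1 : ℝ) ^ k * (j.choose k) := by
          rw [← Finset.sum_range_reflect (fun k => (-1 : ℝ) ^ k * (j.choose k)) (j + 1)]
          apply sum_congr rfl; intro k hk
          rw [mem_range, Nat.lt_succ_iff] at hk
          show ((j.choose k : ℝ)) * (-1) ^ (j - k)
              = (-1 : ℝ) ^ (j + 1 - 1 - k) * (j.choose (j + 1 - 1 - k))
          have hjk : j + 1 - 1 - k = j - k := by omega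
          rw [hjk, Nat.choose_symm hk, mul_comm]
        rw [h6]
        exact_mod_cast congrArg (Int.cast (R := ℝ)) this
      rw [h5]
      rcases eq_or_ne j 0 with h | h
      · subst h; simp
      · simp [h]
    rw [sum_sigma, sum_congr rfl h2]
    rw [Finset.sum_eq_single 0]
    · simp
    · intro b _ hb; simp [hb]
    · intro h; simp at h
  · rintro ⟨k, r⟩ h
    simp only [mem_sigma, mem_range, Nat.lt_succ_iff] at h ⊢
    omega
  · rintro ⟨j, k⟩ h
    simp only [mem_sigma, mem_range, Nat.lt_succ_iff] at h ⊢
    omega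
  · rintro ⟨k, r⟩ h
    simp only [mem_sigma, mem_range, Nat.lt_succ_iff] at h
    simp
  · rintro ⟨j, k⟩ h
    simp only [mem_sigma, mem_range, Nat.lt_succ_iff] at h
    have hjk : k + (j - k) = j := by omega
    simp [hjk]
  · rintro ⟨k, r⟩ h
    simp only [mem_sigma, mem_range, Nat.lt_succ_iff] at h
    simp

theorem stmt_10 (ν : ℝ) (hν : ν ∈ Set.Ioc (0 : ℝ) 1) (μ : ℝ) (hμ : 0 < μ)
    (n₀ : ℕ) (hn : 1 ≤ n₀)
    (E : ℝ → ℝ) (hE : ∀ x, E x = ∑' h : ℕ, x ^ h / Real.Gamma (ν * h + 1))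
    (t : ℝ) (ht : 0 < t) :
    ∑ k ∈ Finset.range (n₀ + 1), (n₀.choose k : ℝ) *
        ∑ r ∈ Finset.range (n₀ - k + 1),
          ((n₀ - k).choose r : ℝ) * (-1) ^ r * E (-(((k : ℝ) + r) * μ * t ^ ν)) =
      1 := by
  have hE0 : E 0 = 1 := by
    rw [hE 0]
    rw [tsum_eq_single 0]
    · simp [Real.Gamma_one]
    · intro h hh
      simp [zero_pow hh]
  have := key_sum n₀ (fun j => E (-((j : ℝ) * μ * t ^ ν)))
  have heq : ∀ k ∈ range (n₀ + 1), (n₀.choose k : ℝ) *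
      ∑ r ∈ range (n₀ - k + 1), ((n₀ - k).choose r : ℝ) * (-1) ^ r * E (-(((k : ℝ) + r) * μ * t ^ ν))
      = (n₀.choose k : ℝ) *
      ∑ r ∈ range (n₀ - k + 1), ((n₀ - k).choose r : ℝ) * (-1) ^ r * E (-(((k + r : ℕ) : ℝ) * μ * t ^ ν)) := by
    intro k _; congr 1; apply sum_congr rfl; intro r _; push_cast; ring_nf
  rw [sum_congr rfl heq, this]
  simpa using hE0
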